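/- Let v̄₀ > 0 and Q > 0, and define the sequence (v̄ⱼ)ⱼ≥0 by the recursion v̄_{j+1} = Σ_{p=1}^{j} v̄_{j+1−p}·v̄_p + Q·(1 + v̄₀)·v̄_j for j ≥ 0. Set R = (1 + 2v̄₀ − 2√(v̄₀(1 + v̄₀)))/((1 + v̄₀)·Q). Then for every z ∈ [0, R] the series Σ_{j=0}^{∞} v̄ⱼ·zʲ converges, and its sum equals v̄₀ + (1/2)·[(1 − (1 + v̄₀)·Q·z) − √((1 − (1 + v̄₀)·Q·z)² − 4·v̄₀·(1 + v̄₀)·Q·z)]. -/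

import Mathlib

open Finset

lemma tri_le (w : ℕ → ℝ) (hw : ∀ j, 0 ≤ w j) (hw0 : w 0 = 0) (n : ℕ) :
    ∑ j ∈ range (n+1), ∑ p ∈ range (j+1), w p * w (j-p) ≤ (∑ j ∈ range n, w j)^2 := by
  have h1 : ∀ j, ∑ p ∈ range (j+1), w p * w (j-p)
      = ∑ kl ∈ Finset.HasAntidiagonal.antidiagonal j, w kl.1 * w kl.2 := by
    intro j
    rw [Finset.Nat.sum_antidiagonal_eq_sum_range_succ_mk]
  simp_rw [h1]
  have hdisj : (↑(range (n+1)) : Set ℕ).PairwiseDisjoint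
      (fun j => (Finset.HasAntidiagonal.antidiagonal j : Finset (ℕ × ℕ))) := by
    intro i _ j _ hij
    simp only [Finset.disjoint_left]
    intro x hxi hxj
    rw [Finset.HasAntidiagonal.mem_antidiagonal] at hxi hxj
    exact hij (hxi.symm.trans hxj)
  rw [← Finset.sum_biUnion hdisj]
  set S := (range (n+1)).biUnion (fun j => Finset.HasAntidiagonal.antidiagonal j) with hS
  have hfil : ∑ x ∈ S, w x.1 * w x.2
      = ∑ x ∈ S.filter (fun x => w x.1 * w x.2 ≠ 0), w x.1 * w x.2 :=
    (Finset.sum_filter_ne_zero S).symm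
  rw [hfil]
  have hsub : S.filter (fun x => w x.1 * w x.2 ≠ 0) ⊆ range n ×ˢ range n := by
    intro x hx
    rw [Finset.mem_filter] at hx
    obtain ⟨hxS, hxne⟩ := hx
    rw [Finset.mem_biUnion] at hxS
    obtain ⟨j, hj, hxj⟩ := hxS
    rw [Finset.HasAntidiagonal.mem_antidiagonal] at hxj
    rw [Finset.mem_range] at hj
    have h1 : x.1 ≠ 0 := by rintro h; apply hxne; rw [h, hw0]; ring
    have h2 : x.2 ≠ 0 := by rintro h; apply hxne; rw [h, hw0]; ring
    rw [Finset.mem_product, Finset.mem_range, Finset.mem_range]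
    omega
  calc ∑ x ∈ S.filter (fun x => w x.1 * w x.2 ≠ 0), w x.1 * w x.2
      ≤ ∑ x ∈ range n ×ˢ range n, w x.1 * w x.2 := by
        apply Finset.sum_le_sum_of_subset_of_nonneg hsub
        intro x _ _; exact mul_nonneg (hw _) (hw _)
    _ = (∑ j ∈ range n, w j)^2 := by
        rw [Finset.sum_product, sq, Finset.sum_mul]
        congr 1; ext p; rw [Finset.mul_sum]

lemma root_aux {A B : ℝ} (h : A * B = 0) (hA : 0 ≤ A) (hAB : A ≤ B) : A = 0 := by
  nlinarith

theorem stmt_10 (v0 Q : ℝ) (hv0 : 0 < v0) (hQ : 0 < Q) (vb : ℕ → ℝ)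
    (h0 : vb 0 = v0)
    (hrec : ∀ j, vb (j+1) = (∑ p ∈ Finset.Icc 1 j, vb (j+1-p) * vb p) + Q * (1 + v0) * vb j)
    (R : ℝ)
    (hR : R = (1 + 2*v0 - 2*Real.sqrt (v0*(1+v0))) / ((1+v0)*Q)) :
    ∀ z ∈ Set.Icc (0:ℝ) R,
      HasSum (fun j => vb j * z ^ j)
        (v0 + (1/2) * ((1 - (1+v0)*Q*z) -
          Real.sqrt ((1 - (1+v0)*Q*z)^2 - 4*v0*(1+v0)*Q*z))) := by
  intro z hz
  obtain ⟨hz0, hzR⟩ := hz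
  have hσ0 : (0:ℝ) ≤ Real.sqrt (v0*(1+v0)) := Real.sqrt_nonneg _
  set σ := Real.sqrt (v0*(1+v0)) with hσdef
  have hσ2 : σ^2 = v0*(1+v0) := Real.sq_sqrt (by positivity)
  have hσv0 : v0 ≤ σ := by nlinarith
  have ha : (0:ℝ) < (1+v0)*Q := by positivity
  set u := (1+v0)*Q*z with hudef
  have hu0 : 0 ≤ u := by positivity
  have huR : u ≤ 1 + 2*v0 - 2*σ := by
    have h1 : (1+v0)*Q*z ≤ (1+v0)*Q*R := by nlinarith
    have h2 : (1+v0)*Q*R = 1 + 2*v0 - 2*σ := by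
      rw [hR]; field_simp
    rw [hudef]; linarith [h1.trans_eq h2]
  have hu1 : u ≤ 1 := by linarith
  have hD0 : 0 ≤ (1-u)^2 - 4*v0*u := by
    nlinarith [mul_nonneg (show (0:ℝ) ≤ 1 + 2*v0 - 2*σ - u by linarith)
      (show (0:ℝ) ≤ 1 + 2*v0 + 2*σ - u by nlinarith)]
  set D := (1-u)^2 - 4*v0*u with hDdef
  set s := Real.sqrt D with hsdef
  have hs2 : s^2 = D := Real.sq_sqrt hD0
  have hs0 : 0 ≤ s := Real.sqrt_nonneg _
  have hsle : s ≤ 1 - u := by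
    have h1 : D ≤ (1-u)^2 := by rw [hDdef]; nlinarith
    have := Real.sqrt_le_sqrt h1
    rwa [Real.sqrt_sq (by linarith)] at this
  set t := ((1-u) - s)/2 with htdef
  have ht0 : 0 ≤ t := by rw [htdef]; linarith
  have h2t : 2*t ≤ 1 - u := by rw [htdef]; linarith
  have hseq : s = (1 - u) - 2*t := by rw [htdef]; ring
  have hteq : t^2 + (u-1)*t + v0*u = 0 := by
    have h := hs2
    rw [hseq, hDdef] at h
    linear_combination h/4
  -- nonnegativity of vb
  have hvb : ∀ j, 0 ≤ vb j := by
    intro j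
    induction j using Nat.strong_induction_on with
    | _ j ih =>
      match j with
      | 0 => rw [h0]; exact hv0.le
      | Nat.succ k =>
        rw [hrec k]
        apply add_nonneg
        · apply Finset.sum_nonneg
          intro p hp
          rw [Finset.mem_Icc] at hp
          exact mul_nonneg (ih _ (by omega)) (ih p (by omega))
        · exact mul_nonneg (by positivity) (ih k (by omega))
  set f : ℕ → ℝ := fun j => vb j * z^j with hfdef
  have hf0 : ∀ j, 0 ≤ f j := fun j => mul_nonneg (hvb j) (by positivity)
  set w : ℕ → ℝ := fun j => if j = 0 then 0 else f j with hwdef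
  have hw0 : w 0 = 0 := rfl
  have hwnn : ∀ j, 0 ≤ w j := by
    intro j; rw [hwdef]; dsimp only
    split
    · exact le_refl 0
    · exact hf0 j
  -- convolution identity
  have hconv : ∀ k, (∑ p ∈ range (k+2), w p * w (k+1-p)) = z^(k+1) * ∑ p ∈ Finset.Icc 1 k, vb (k+1-p) * vb p := by
    intro k
    have hsub : Finset.Icc 1 k ⊆ range (k+2) := by
      intro p hp; rw [Finset.mem_Icc] at hp; rw [Finset.mem_range]; omega
    rw [← Finset.sum_subset hsub]
    · rw [Finset.mul_sum]
      apply Finset.sum_congr rfl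
      intro p hp
      rw [Finset.mem_Icc] at hp
      have hp1 : p ≠ 0 := by omega
      have hp2 : k+1-p ≠ 0 := by omega
      rw [hwdef]; dsimp only
      rw [if_neg hp1, if_neg hp2, hfdef]; dsimp only
      rw [show z^(k+1) = z^p * z^(k+1-p) by rw [← pow_add]; congr 1; omega]
      ring
    · intro p hp hnp
      rw [Finset.mem_range] at hp
      rw [Finset.mem_Icc] at hnp
      have : p = 0 ∨ p = k+1 := by omega
      rcases this with h | h
      · rw [h, hw0]; ring
      · rw [h]; simp [hwdef]
  -- key recursion for w
  have hwrec : ∀ k, w (k+1) = (∑ p ∈ range (k+2), w p * w (k+1-p)) + u * f k := by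
    intro k
    rw [hconv k, hwdef]; dsimp only
    rw [if_neg (Nat.succ_ne_zero k), hfdef]; dsimp only
    rw [hrec k, hudef]
    ring
  -- partial sums of f vs w
  have hfw : ∀ n, ∑ j ∈ range n, f j ≤ v0 + ∑ j ∈ range n, w j := by
    intro n
    match n with
    | 0 => simp [hv0.le]
    | Nat.succ m =>
      rw [Finset.sum_range_succ', Finset.sum_range_succ' (fun j => w j)]
      have h1 : ∀ k : ℕ, f (k+1) = w (k+1) := by
        intro k; rw [hwdef]; dsimp only; rw [if_neg (Nat.succ_ne_zero k)]
      simp_rw [h1]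
      have hf00 : f 0 = v0 := by rw [hfdef]; simp [h0]
      linarith [hf00, hw0]
  -- partial sum bound
  have hP : ∀ n, ∑ j ∈ range n, w j ≤ t := by
    intro n
    induction n with
    | zero => simpa using ht0
    | succ n ih =>
      have hPn0 : 0 ≤ ∑ j ∈ range n, w j := Finset.sum_nonneg (fun j _ => hwnn j)
      rw [Finset.sum_range_succ' (fun j => w j), hw0, add_zero]
      have step : ∑ k ∈ range n, w (k+1)
          = (∑ k ∈ range n, ∑ p ∈ range (k+2), w p * w (k+1-p)) + u * ∑ k ∈ range n, f k := by
        rw [Finset.mul_sum, ← Finset.sum_add_distrib]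
        exact Finset.sum_congr rfl (fun k _ => hwrec k)
      rw [step]
      have htri : (∑ k ∈ range n, ∑ p ∈ range (k+2), w p * w (k+1-p))
          ≤ (∑ j ∈ range n, w j)^2 := by
        have h2 : ∑ j ∈ range (n+1), ∑ p ∈ range (j+1), w p * w (j-p)
            = (∑ p ∈ range 1, w p * w (0-p)) + ∑ k ∈ range n, ∑ p ∈ range (k+2), w p * w (k+1-p) := by
          rw [Finset.sum_range_succ' (fun j => ∑ p ∈ range (j+1), w p * w (j-p))]
          ring
        have h3 := tri_le w hwnn hw0 n
        rw [h2] at h3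
        have h4 : (∑ p ∈ range 1, w p * w (0-p)) = 0 := by simp [hw0]
        linarith
      have hfb : ∑ k ∈ range n, f k ≤ v0 + t := le_trans (hfw n) (by linarith)
      have hub : u * ∑ k ∈ range n, f k ≤ u * (v0 + t) :=
        mul_le_mul_of_nonneg_left hfb hu0
      nlinarith [mul_nonneg (sub_nonneg.2 ih) (show (0:ℝ) ≤ t + ∑ j ∈ range n, w j by linarith)]
  -- summability
  have hwsum : Summable w :=
    summable_of_sum_range_le hwnn hP
  have hfsum : Summable f :=
    summable_of_sum_range_le hf0 (fun n => le_trans (hfw n)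
      (show v0 + ∑ j ∈ range n, w j ≤ v0 + t by linarith [hP n]))
  have hwnorm : Summable (fun j => ‖w j‖) := by
    have : (fun j => ‖w j‖) = w := by
      funext j; exact Real.norm_of_nonneg (hwnn j)
    rw [this]; exact hwsum
  set T := ∑' j, w j with hTdef
  have hT0 : 0 ≤ T := tsum_nonneg hwnn
  have hTle : T ≤ t := Real.tsum_le_of_sum_range_le hwnn hP
  -- L = v0 + T
  set L := ∑' j, f j with hLdef
  have hfw1 : ∀ k : ℕ, f (k+1) = w (k+1) := by
    intro k; rw [hwdef]; dsimp only; rw [if_neg (Nat.succ_ne_zero k)]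
  have hLT : L = v0 + T := by
    have e1 : ∑' j, f j = f 0 + ∑' k, f (k+1) := Summable.tsum_eq_zero_add hfsum
    have e2 : ∑' j, w j = w 0 + ∑' k, w (k+1) := Summable.tsum_eq_zero_add hwsum
    have hf00 : f 0 = v0 := by rw [hfdef]; simp [h0]
    have e3 : (fun k => f (k+1)) = (fun k => w (k+1)) := funext hfw1
    rw [hLdef, hTdef, e1, e2, hf00, hw0, e3, zero_add]
  -- Cauchy product
  set c : ℕ → ℝ := fun j => ∑ p ∈ range (j+1), w p * w (j-p) with hcdef
  have hcsum : Summable c :=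
    (summable_norm_sum_mul_range_of_summable_norm hwnorm hwnorm).of_norm
  have hcT : ∑' j, c j = T * T := by
    have h := tsum_mul_tsum_eq_tsum_sum_range_of_summable_norm hwnorm hwnorm
    rw [hTdef, hcdef]
    exact h.symm
  have hc0 : c 0 = 0 := by simp [hcdef, hw0]
  -- T equation
  have hcsucc : ∀ k : ℕ, c (k+1) = ∑ p ∈ range (k+2), w p * w (k+1-p) := fun k => rfl
  have hTeq : T = T * T + u * L := by
    have h1 : T = ∑' k, w (k+1) := by
      rw [hTdef, Summable.tsum_eq_zero_add hwsum, hw0, zero_add]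
    have h2 : ∑' k, c (k+1) = T * T := by
      have := Summable.tsum_eq_zero_add hcsum
      rw [hc0, zero_add] at this
      rw [← this, hcT]
    have hcsum' : Summable (fun k => c (k+1)) := (summable_nat_add_iff 1).mpr hcsum
    have hufsum : Summable (fun k => u * f k) := hfsum.mul_left u
    have h3 : ∀ k : ℕ, w (k+1) = c (k+1) + u * f k := fun k => hwrec k
    calc T = ∑' k, w (k+1) := h1
      _ = ∑' k, (c (k+1) + u * f k) := tsum_congr h3
      _ = (∑' k, c (k+1)) + ∑' k, u * f k := Summable.tsum_add hcsum' hufsum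
      _ = T * T + u * L := by rw [h2, tsum_mul_left, ← hLdef]
  -- identify T = t
  have hTt : T = t := by
    have hq : (t - T) * ((1-u) - t - T) = 0 := by
      have hTq : T^2 + (u-1)*T + v0*u = 0 := by
        rw [hLT] at hTeq
        linear_combination -hTeq
      linear_combination hTq - hteq
    have h5 : t - T = 0 := root_aux hq (sub_nonneg.2 hTle) (by linarith)
    linarith
  -- conclude
  have hfinal : HasSum f L := hfsum.hasSum
  have hval : L = v0 + 1 / 2 * (1 - u - Real.sqrt ((1 - u) ^ 2 - 4 * v0 * (1 + v0) * Q * z)) := by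
    have harg : (1 - u) ^ 2 - 4 * v0 * (1 + v0) * Q * z = D := by
      rw [hDdef, hudef]; ring
    rw [harg, ← hsdef, hLT, hTt, htdef]
    ring
  rw [← hval]
  exact hfinal
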